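/- Let A be a vector space over ℂ with two ℂ-bilinear products · and ∗ satisfying the interchange law (a ∗ b) · (c ∗ d) = (a · c) ∗ (b · d) for all a, b, c, d ∈ A, and let B₁, B₂ : A × A → A be ℂ-bilinear maps. For each t ∈ ℂ define the deformed products a ·ₜ b := a · b + t • B₁(a, b) and a ∗ₜ b := a ∗ b + t • B₂(a, b). If for every t ∈ ℂ the deformed products again satisfy the interchange law, i.e. (a ·ₜ b) ∗ₜ (c ·ₜ d) = (a ∗ₜ c) ·ₜ (b ∗ₜ d) for all a, b, c, d ∈ A, then the pair (B₁, B₂) satisfies the first-order constraint (a · b) ∗ B₁(c, d) + B₁(a, b) ∗ (c · d) − B₁(a ∗ c, b ∗ d) = (a ∗ c) · B₂(b, d) + B₂(a, c) · (b ∗ d) − B₂(a · b, c · d) for all a, b, c, d ∈ A. -/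
import Mathlib

lemma aux_coeff_one {A : Type*} [AddCommGroup A] [Module ℂ A] (x y z : A)
    (h : ∀ t : ℂ, t • x + (t^2) • y + (t^3) • z = 0) : x = 0 := by
  have h1 := h 1
  have h2 := h (-1)
  have h3 := h 2
  have : x = (1:ℂ) • ((1:ℂ) • x + ((1:ℂ)^2) • y + ((1:ℂ)^3) • z)
      - (1/3:ℂ) • ((-1:ℂ) • x + ((-1:ℂ)^2) • y + ((-1:ℂ)^3) • z)
      - (1/6:ℂ) • ((2:ℂ) • x + ((2:ℂ)^2) • y + ((2:ℂ)^3) • z) := by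
    module
  rw [h1, h2, h3] at this
  simpa using this


/-- **First-order constraint on deformations of a double algebra.**
Let `A` be a ℂ-vector space with two ℂ-bilinear products `cdot` (·) and `ast` (∗)
satisfying the interchange law `(a ∗ b) · (c ∗ d) = (a · c) ∗ (b · d)`, and let
`B₁, B₂` be ℂ-bilinear maps. Deform the products by
`a ·ₜ b = a · b + t • B₁ a b` and `a ∗ₜ b = a ∗ b + t • B₂ a b`. If for every
`t : ℂ` the deformed products again satisfy the interchange law
`(a ·ₜ b) ∗ₜ (c ·ₜ d) = (a ∗ₜ c) ·ₜ (b ∗ₜ d)`, then `(B₁, B₂)` satisfies the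
first-order constraint
`(a·b) ∗ B₁(c,d) + B₁(a,b) ∗ (c·d) − B₁(a∗c, b∗d)
  = (a∗c) · B₂(b,d) + B₂(a,c) · (b∗d) − B₂(a·b, c·d)`. -/
theorem double_algebra_first_order_deformation_constraint
    {A : Type*} [AddCommGroup A] [Module ℂ A]
    (cdot ast : A →ₗ[ℂ] A →ₗ[ℂ] A)
    (interchange : ∀ a b c d : A,
      cdot (ast a b) (ast c d) = ast (cdot a c) (cdot b d))
    (B₁ B₂ : A →ₗ[ℂ] A →ₗ[ℂ] A)
    (cdotT : ℂ → A → A → A) (astT : ℂ → A → A → A)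
    (hcdotT : ∀ (t : ℂ) (a b : A), cdotT t a b = cdot a b + t • B₁ a b)
    (hastT : ∀ (t : ℂ) (a b : A), astT t a b = ast a b + t • B₂ a b)
    (hdeformed : ∀ (t : ℂ) (a b c d : A),
      astT t (cdotT t a b) (cdotT t c d) = cdotT t (astT t a c) (astT t b d)) :
    ∀ a b c d : A,
      ast (cdot a b) (B₁ c d) + ast (B₁ a b) (cdot c d) - B₁ (ast a c) (ast b d)
        = cdot (ast a c) (B₂ b d) + cdot (B₂ a c) (ast b d)
          - B₂ (cdot a b) (cdot c d) := by
  intro a b c d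
  rw [← sub_eq_zero]
  apply aux_coeff_one
    (y := (ast (B₁ a b) (B₁ c d) + B₂ (cdot a b) (B₁ c d) + B₂ (B₁ a b) (cdot c d))
      - (cdot (B₂ a c) (B₂ b d) + B₁ (ast a c) (B₂ b d) + B₁ (B₂ a c) (ast b d)))
    (z := B₂ (B₁ a b) (B₁ c d) - B₁ (B₂ a c) (B₂ b d))
  intro t
  have H := hdeformed t a b c d
  simp only [hcdotT, hastT, map_add, map_smul, LinearMap.add_apply,
    LinearMap.smul_apply, smul_add, smul_smul] at H
  rw [interchange a c b d] at H
  linear_combination (norm := module) H
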